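/- Hudson's test terminates: starting from any homaloidal type (d; m_1,...,m_r) with d ≥ 1, repeated application of the step 'sort multiplicities in decreasing order and replace (d; m_1,...,m_r) by (d-ε; m_1-ε, m_2-ε, m_3-ε, m_4,...,m_r) where ε = m_1+m_2+m_3-d' either reaches a tuple with a negative entry or reaches (1; 0, ..., 0) after finitely many steps. -/

import Mathlib

/-- A homaloidal type is encoded as a pair `(d, s)` where `s` is the multiset of
multiplicities. One step of Hudson's test: sort the multiplicities decreasingly,
set `ε = m₁ + m₂ + m₃ - d` and replace `(d; m₁, ..., m_r)` by
`(d - ε; m₁ - ε, m₂ - ε, m₃ - ε, m₄, ..., m_r)`. -/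
def hudsonStep (p : ℤ × Multiset ℤ) : ℤ × Multiset ℤ :=
  match Multiset.sort p.2 (· ≥ ·) with
  | a :: b :: c :: rest =>
      let ε := a + b + c - p.1
      (p.1 - ε, ((a - ε) :: (b - ε) :: (c - ε) :: rest : List ℤ))
  | l => (p.1, (l : List ℤ))

set_option maxHeartbeats 1000000 in
/-- Noether's inequality: for a homaloidal type of degree `d ≥ 2` with nonnegative
multiplicities, the three largest multiplicities satisfy `m₁ + m₂ + m₃ ≥ d + 1`. -/
private theorem noether_aux (d a b c rs rq : ℤ) (hd : 2 ≤ d) (hab : b ≤ a) (hbc : c ≤ b)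
    (hc : 0 ≤ c) (ha : a ≤ d - 1) (hcb : rq ≤ c * rs)
    (e1 : a + b + c + rs = 3 * (d - 1)) (e2 : a^2 + b^2 + c^2 + rq = d^2 - 1) :
    d + 1 ≤ a + b + c := by
  by_contra hcon
  push_neg at hcon
  have habs : a + b + c ≤ d := by linarith
  set x := d - a - b - c with hx
  have hx0 : 0 ≤ x := by linarith
  have hF : 2*a*b + 2*a*x + 2*b*x + x^2 + 3*c - 2*c^2 - 3*c*x - 1 ≤ 0 := by
    have hq : rq = d^2 - 1 - a^2 - b^2 - c^2 := by linarith
    have hrs : rs = 3*(d-1) - a - b - c := by linarith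
    rw [hq, hrs] at hcb
    nlinarith [hcb]
  have h1 : 1 ≤ b + c + x := by linarith
  have h2 : 2 ≤ a + b + c + x := by linarith
  clear_value x
  clear hcb e1 e2 hx hcon habs ha hd
  nlinarith [mul_nonneg (sub_nonneg.2 hab) (by linarith : (0:ℤ) ≤ b),
    mul_nonneg (sub_nonneg.2 hab) hx0, mul_nonneg (sub_nonneg.2 hbc) hx0,
    mul_nonneg (sub_nonneg.2 hbc) (by linarith : (0:ℤ) ≤ b), sq_nonneg (b+c+x-1),
    mul_nonneg hx0 (by linarith : (0:ℤ) ≤ a+b+c+x-2), sq_nonneg (x-1), sq_nonneg x]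

private theorem sq_sum_le (c : ℤ) (l : List ℤ) (h : ∀ x ∈ l, 0 ≤ x ∧ x ≤ c) :
    (l.map (fun x => x ^ 2)).sum ≤ c * l.sum := by
  induction l with
  | nil => simp
  | cons y t ih =>
      have hy := h y (by simp)
      have ht := ih (fun x hx => h x (by simp [hx]))
      simp only [List.map_cons, List.sum_cons]
      nlinarith [hy.1, hy.2, ht]

private theorem hudson_aux : ∀ k : ℕ, ∀ d : ℤ, ∀ s : Multiset ℤ, d ≤ (k : ℤ) → 1 ≤ d →
    s.sum = 3 * (d - 1) → (s.map (fun x => x ^ 2)).sum = d ^ 2 - 1 →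
    ∃ n : ℕ, (∃ x ∈ (hudsonStep^[n] (d, s)).2, x < 0) ∨
      ((hudsonStep^[n] (d, s)).1 = 1 ∧ ∀ x ∈ (hudsonStep^[n] (d, s)).2, x = 0) := by
  intro k
  induction k with
  | zero => intro d s hk hd _ _; exfalso; omega
  | succ k ih =>
    intro d s hk hd h1 h2
    rcases eq_or_lt_of_le hd with hd1 | hd2
    · -- d = 1 : all multiplicities are zero
      refine ⟨0, Or.inr ?_⟩
      simp only [Function.iterate_zero, id_eq]
      refine ⟨hd1.symm, fun x hx => ?_⟩
      have hsq : (s.map (fun x => x ^ 2)).sum = 0 := by rw [h2, ← hd1]; ring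
      have hmem : x ^ 2 ∈ s.map (fun x => x ^ 2) := Multiset.mem_map_of_mem _ hx
      have hle : x ^ 2 ≤ (s.map (fun x => x ^ 2)).sum :=
        Multiset.single_le_sum (fun y hy => by
          obtain ⟨z, _, rfl⟩ := Multiset.mem_map.1 hy; positivity) _ hmem
      nlinarith [sq_nonneg x]
    · -- 2 ≤ d
      have hd2' : 2 ≤ d := hd2
      by_cases hneg : ∃ x ∈ s, x < 0
      · exact ⟨0, Or.inl (by simpa using hneg)⟩
      push_neg at hneg
      rcases hsort : Multiset.sort s (· ≥ ·) with _ | ⟨a, _ | ⟨b, _ | ⟨c, rest⟩⟩⟩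
      · exfalso
        have hs : s = 0 := by
          have := Multiset.sort_eq s (· ≥ ·)
          rw [hsort] at this; simpa using this.symm
        rw [hs] at h1; simp at h1; omega
      · exfalso
        have hs : s = {a} := by
          have := Multiset.sort_eq s (· ≥ ·)
          rw [hsort] at this; simpa using this.symm
        rw [hs] at h1 h2
        simp at h1 h2
        nlinarith [h1, h2]
      · exfalso
        have hs : s = (↑[a, b] : Multiset ℤ) := by
          have := Multiset.sort_eq s (· ≥ ·)
          rw [hsort] at this; exact this.symm
        rw [hs] at h1 h2
        simp at h1 h2
        nlinarith [sq_nonneg (a - b)]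
      · -- main case: at least three multiplicities
        have hs : s = (↑(a :: b :: c :: rest) : Multiset ℤ) := by
          have := Multiset.sort_eq s (· ≥ ·)
          rw [hsort] at this; exact this.symm
        have hsorted : List.Pairwise (· ≥ ·) (a :: b :: c :: rest) := by
          have := Multiset.pairwise_sort s (· ≥ ·)
          rwa [hsort] at this
        rw [List.pairwise_cons] at hsorted
        obtain ⟨ha_ge, hsorted⟩ := hsorted
        rw [List.pairwise_cons] at hsorted
        obtain ⟨hb_ge, hsorted⟩ := hsorted
        rw [List.pairwise_cons] at hsorted
        obtain ⟨hc_ge, _⟩ := hsorted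
        have hab : b ≤ a := ha_ge b (by simp)
        have hbc : c ≤ b := hb_ge c (by simp)
        have hmem : ∀ x ∈ (a :: b :: c :: rest), 0 ≤ x := by
          intro x hx; exact hneg x (by rw [hs]; exact_mod_cast hx)
        have ha0 : 0 ≤ a := hmem a (by simp)
        have hb0 : 0 ≤ b := hmem b (by simp)
        have hc0 : 0 ≤ c := hmem c (by simp)
        have hrest : ∀ x ∈ rest, 0 ≤ x ∧ x ≤ c := fun x hx =>
          ⟨hmem x (by simp [hx]), hc_ge x hx⟩
        have e1 : a + b + c + rest.sum = 3 * (d - 1) := by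
          rw [hs] at h1; simpa [add_assoc] using h1
        have e2 : a ^ 2 + b ^ 2 + c ^ 2 + (rest.map (fun x => x ^ 2)).sum = d ^ 2 - 1 := by
          rw [hs] at h2; simpa [add_assoc] using h2
        have hrq0 : 0 ≤ (rest.map (fun x => x ^ 2)).sum :=
          List.sum_nonneg (fun x hx => by
            obtain ⟨z, _, rfl⟩ := List.mem_map.1 hx; positivity)
        have hcb : (rest.map (fun x => x ^ 2)).sum ≤ c * rest.sum := sq_sum_le c rest hrest
        have ha1 : a ≤ d - 1 := by
          by_contra hcon
          push_neg at hcon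
          have : d * d ≤ a * a := mul_self_le_mul_self (by linarith) (by linarith)
          nlinarith [sq_nonneg b, sq_nonneg c]
        have hnoe : d + 1 ≤ a + b + c :=
          noether_aux d a b c rest.sum (rest.map (fun x => x ^ 2)).sum
            hd2' hab hbc hc0 ha1 hcb e1 e2
        set ε : ℤ := a + b + c - d with hε
        have hε1 : 1 ≤ ε := by omega
        have hstep : hudsonStep (d, s) =
            (d - ε, (↑((a - ε) :: (b - ε) :: (c - ε) :: rest) : Multiset ℤ)) := by
          unfold hudsonStep
          rw [show (d, s).2 = s from rfl, hsort]
        set d' : ℤ := d - ε with hd'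
        set s' : Multiset ℤ := (↑((a - ε) :: (b - ε) :: (c - ε) :: rest) : Multiset ℤ)
          with hs'
        have e1' : s'.sum = 3 * (d' - 1) := by
          simp only [hs', Multiset.sum_coe, List.sum_cons]
          linarith [e1]
        have e2' : (s'.map (fun x => x ^ 2)).sum = d' ^ 2 - 1 := by
          simp only [hs', Multiset.map_coe, Multiset.sum_coe, List.map_cons, List.sum_cons]
          have : (a - ε) ^ 2 + ((b - ε) ^ 2 + ((c - ε) ^ 2 + (rest.map (fun x => x ^ 2)).sum))
              = (a ^ 2 + b ^ 2 + c ^ 2 + (rest.map (fun x => x ^ 2)).sum)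
                - 2 * ε * (a + b + c) + 3 * ε ^ 2 := by ring
          rw [this, e2, hε]
          rw [hd', hε]
          ring_nf
        by_cases hneg' : ∃ x ∈ s', x < 0
        · refine ⟨1, Or.inl ?_⟩
          rw [Function.iterate_one, hstep]
          exact hneg'
        · push_neg at hneg'
          have hsum0 : (0:ℤ) ≤ s'.sum := Multiset.sum_nonneg hneg'
          have hd'1 : 1 ≤ d' := by
            rw [e1'] at hsum0; omega
          have hd'k : d' ≤ (k : ℤ) := by
            have : d ≤ (k : ℤ) + 1 := by exact_mod_cast hk
            omega
          obtain ⟨n, hn⟩ := ih d' s' hd'k hd'1 e1' e2'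
          refine ⟨n + 1, ?_⟩
          rw [Function.iterate_succ_apply, hstep]
          exact hn

/-- Hudson's test terminates: starting from any homaloidal type `(d; m_1, ..., m_r)`
with `d ≥ 1` (satisfying the Noether equalities), after finitely many steps one either
reaches a tuple with a negative entry or reaches `(1; 0, ..., 0)`. -/
theorem hudson_test_terminates (d : ℤ) (s : Multiset ℤ) (hd : 1 ≤ d)
    (h1 : s.sum = 3 * (d - 1))
    (h2 : (s.map (fun x => x ^ 2)).sum = d ^ 2 - 1) :
    ∃ n : ℕ, (∃ x ∈ (hudsonStep^[n] (d, s)).2, x < 0) ∨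
      ((hudsonStep^[n] (d, s)).1 = 1 ∧ ∀ x ∈ (hudsonStep^[n] (d, s)).2, x = 0) := by
  exact hudson_aux d.toNat d s (by omega) hd h1 h2
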